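/- Let V be a vector space of dimension k ≥ 2 over a finite field K with |K| = q, and let U_1, ..., U_{q+1} be proper subspaces of V whose union is V. Then there exists a subspace S of V of dimension k−2 such that {U_1, ..., U_{q+1}} is exactly the set of all (k−1)-dimensional subspaces of V containing S. -/

import Mathlib

open Module Submodule

private lemma aux_no_cover {K V : Type*} [Field K] [Fintype K] [AddCommGroup V] [Module K V] :
    ∀ s : Finset (Submodule K V), s.card ≤ Fintype.card K →
    (∀ W ∈ s, W ≠ ⊤) → ∃ x : V, ∀ W ∈ s, x ∉ W := by
  classical
  intro s
  induction s using Finset.strongInduction with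
  | _ s ih =>
    intro hcard hs
    by_contra hx
    push_neg at hx
    by_cases hred : ∃ W₀ ∈ s, ∀ x ∈ W₀, ∃ W ∈ s.erase W₀, x ∈ W
    · obtain ⟨W₀, hW₀s, hcov⟩ := hred
      obtain ⟨x, hx'⟩ := ih (s.erase W₀) (Finset.erase_ssubset hW₀s)
        (le_trans (Finset.card_le_card (Finset.erase_subset _ _)) hcard)
        (fun W hW => hs W (Finset.mem_of_mem_erase hW))
      obtain ⟨W, hWs, hxW⟩ := hx x
      by_cases hWW : W = W₀
      · subst hWW
        obtain ⟨W', hW', hxW'⟩ := hcov x hxW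
        exact hx' W' hW' hxW'
      · exact hx' W (Finset.mem_erase.mpr ⟨hWW, hWs⟩) hxW
    · push_neg at hred
      have hne : s.Nonempty := by
        obtain ⟨W, hW, _⟩ := hx 0; exact ⟨W, hW⟩
      obtain ⟨W₀, hW₀⟩ := hne
      obtain ⟨x₀, hx₀W, hx₀⟩ := hred W₀ hW₀
      obtain ⟨y, hy⟩ : ∃ y, y ∉ W₀ := by
        by_contra h; push_neg at h
        exact hs W₀ hW₀ (Submodule.eq_top_iff'.mpr h)
      choose f hf1 hf2 using fun t : K => hx (y + t • x₀)
      have hfe : ∀ t, f t ∈ s.erase W₀ := by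
        intro t
        refine Finset.mem_erase.mpr ⟨?_, hf1 t⟩
        intro h
        apply hy
        have h2 := hf2 t
        rw [h] at h2
        have : (y + t • x₀) - t • x₀ ∈ W₀ := W₀.sub_mem h2 (W₀.smul_mem t hx₀W)
        simpa using this
      have hinj : Function.Injective f := by
        intro t t' h
        by_contra hne'
        have h1 := hf2 t
        have h2 := hf2 t'
        rw [h] at h1
        have key : (t - t') • x₀ = (y + t • x₀) - (y + t' • x₀) := by
          rw [sub_smul]; abel
        have hmem : (t - t') • x₀ ∈ f t' := by
          rw [key]; exact (f t').sub_mem h1 h2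
        have hx0 : x₀ ∈ f t' := ((f t').smul_mem_iff (sub_ne_zero.mpr hne')).mp hmem
        exact hx₀ _ (hfe t') hx0
      have hle : Fintype.card K ≤ (s.erase W₀).card := by
        have := Fintype.card_le_of_injective
          (fun t : K => (⟨f t, hfe t⟩ : {W // W ∈ s.erase W₀}))
          (fun a b hab => hinj (congrArg Subtype.val hab))
        simpa [Fintype.card_coe] using this
      have h1 : (s.erase W₀).card = s.card - 1 := Finset.card_erase_of_mem hW₀
      have h2 : 0 < s.card := Finset.card_pos.mpr ⟨W₀, hW₀⟩
      omega



private lemma aux_arith (q k d t : ℕ) (hq : 2 ≤ q) (hdk : d < k) (h2d : k + t = 2*d)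
    (heq : (q+1) * q^d = q^k + q * q^t) : d + 1 = k := by
  by_contra h
  have ha2 : 2 ≤ k - d := by omega
  have hd' : d = t + (k - d) := by omega
  have hk' : k = t + ((k - d) + (k - d)) := by omega
  set a := k - d with haa
  rw [hd', hk', pow_add, pow_add, pow_add] at heq
  have hqt : 0 < q ^ t := pow_pos (by omega) t
  have key : (q+1) * q^a = q^a * q^a + q := by
    have h1 : q^t * ((q+1) * q^a) = q^t * (q^a * q^a + q) := by
      ring_nf
      ring_nf at heq
      linarith
    exact Nat.eq_of_mul_eq_mul_left hqt h1
  have hX : q^2 ≤ q^a := Nat.pow_le_pow_right (by omega) ha2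
  have hq2 : q^2 = q * q := by ring
  have hXq : 0 < q ^ a := pow_pos (by omega) a
  nlinarith [key, hX, hXq, hq]

theorem stmt_2 (K V : Type*) [Field K] [Fintype K]
    [AddCommGroup V] [Module K V] [FiniteDimensional K V]
    (k : ℕ) (hk : 2 ≤ k) (hdim : Module.finrank K V = k)
    (U : Fin (Fintype.card K + 1) → Submodule K V)
    (hU : ∀ i, U i ≠ ⊤)
    (hcover : (⋃ i, (U i : Set V)) = Set.univ) :
    ∃ S : Submodule K V, Module.finrank K S = k - 2 ∧
      Set.range U = {W : Submodule K V | S ≤ W ∧ Module.finrank K W = k - 1} := by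
  classical
  have hq : 2 ≤ Fintype.card K := Fintype.one_lt_card
  have hcov : ∀ x : V, ∃ i, x ∈ U i := by
    intro x
    have : x ∈ ⋃ i, (U i : Set V) := (Set.eq_univ_iff_forall.mp hcover) x
    simpa using this
  -- essential points
  have hess : ∀ i, ∃ x, x ∈ U i ∧ ∀ j, j ≠ i → x ∉ U j := by
    intro i
    obtain ⟨x, hx⟩ := aux_no_cover ((Finset.univ.erase i).image U)
      (le_trans (Finset.card_image_le) (by simp [Finset.card_erase_of_mem]))
      (by rintro W hW; simp only [Finset.mem_image] at hW
          obtain ⟨j, _, rfl⟩ := hW; exact hU j)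
    obtain ⟨m, hm⟩ := hcov x
    have hmi : m = i := by
      by_contra hmi
      exact hx (U m) (Finset.mem_image_of_mem U (by simp [hmi])) hm
    subst hmi
    exact ⟨x, hm, fun j hj hxj => hx (U j) (Finset.mem_image_of_mem U (by simp [hj])) hxj⟩
  choose v hv hv' using hess
  -- Step B : pairwise sup is top
  have hsup : ∀ i j, i ≠ j → U i ⊔ U j = ⊤ := by
    intro i j hij
    by_contra hne
    obtain ⟨x, hx⟩ : ∃ x, x ∉ U i ⊔ U j := by
      by_contra h; push_neg at h; exact hne (eq_top_iff'.mpr h)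
    have hxi : x ∉ U i := fun h => hx (le_sup_left (a := U i) (b := U j) h)
    set r : Option K → V := fun o => o.elim (v i) (fun t => x + t • v i) with hr
    choose f hf using fun o => hcov (r o)
    have hvm : ∀ c, v i ∈ U c → c = i := by
      intro c hc; by_contra h; exact hv' i c h hc
    have hkey : ∀ t : K, x + t • v i ∈ U i → False := by
      intro t ht
      exact hx (le_sup_left (a := U i) (b := U j)
        (by simpa using (U i).sub_mem ht ((U i).smul_mem t (hv i))))
    have hinj : Function.Injective f := by
      intro o₁ o₂ h
      match o₁, o₂ with
      | Option.none, Option.none => rfl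
      | Option.none, Option.some t =>
        exfalso
        have h1 : v i ∈ U (f (Option.some t)) := h ▸ hf Option.none
        have h2 : x + t • v i ∈ U (f (Option.some t)) := hf (Option.some t)
        have := hvm _ h1
        rw [this] at h2
        exact hkey t h2
      | Option.some t, Option.none =>
        exfalso
        have h1 : v i ∈ U (f (Option.some t)) := h.symm ▸ hf Option.none
        have h2 : x + t • v i ∈ U (f (Option.some t)) := hf (Option.some t)
        have := hvm _ h1
        rw [this] at h2
        exact hkey t h2
      | Option.some t, Option.some t' =>
        by_cases htt : t = t'
        · rw [htt]
        · exfalso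
          have h1 : x + t • v i ∈ U (f (Option.some t')) := h ▸ hf (Option.some t)
          have h2 : x + t' • v i ∈ U (f (Option.some t')) := hf (Option.some t')
          have hmem : (t - t') • v i ∈ U (f (Option.some t')) := by
            have : (t - t') • v i = (x + t • v i) - (x + t' • v i) := by
              rw [sub_smul]; abel
            rw [this]; exact (U _).sub_mem h1 h2
          have hvmem : v i ∈ U (f (Option.some t')) :=
            ((U _).smul_mem_iff (sub_ne_zero.mpr htt)).mp hmem
          have := hvm _ hvmem
          rw [this] at h2
          exact hkey t' h2
    have hbij : Function.Bijective f :=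
      (Fintype.bijective_iff_injective_and_card f).mpr ⟨hinj, by simp⟩
    obtain ⟨o, ho⟩ := hbij.2 j
    match o with
    | Option.none =>
      exact hv' i j (Ne.symm hij) (by simpa [ho, hr] using hf Option.none : v i ∈ U j)
    | Option.some t =>
      have h1 : x + t • v i ∈ U j := by simpa [ho, hr] using hf (Option.some t)
      have : x ∈ U i ⊔ U j := by
        have ha : x + t • v i ∈ U i ⊔ U j := le_sup_right (a := U i) h1
        have hb : t • v i ∈ U i ⊔ U j := le_sup_left (b := U j) ((U i).smul_mem t (hv i))
        simpa using Submodule.sub_mem _ ha hb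
      exact hx this
    -- Step C : a point in two distinct subspaces is in all of them
  have hker : ∀ (m : Fin (Fintype.card K + 1)) (x : V) (a b : Fin (Fintype.card K + 1)),
      a ≠ b → x ∈ U a → x ∈ U b → x ∈ U m := by
    intro m x a b hab hxa hxb
    by_contra hxm
    set r : Option K → V := fun o => o.elim (v m) (fun t => x + t • v m) with hr
    choose f hf using fun o => hcov (r o)
    have hvm : ∀ c, v m ∈ U c → c = m := by
      intro c hc; by_contra h; exact hv' m c h hc
    have hkey : ∀ t : K, x + t • v m ∈ U m → False := by
      intro t ht
      exact hxm (by simpa using (U m).sub_mem ht ((U m).smul_mem t (hv m)))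
    have hinj : Function.Injective f := by
      intro o₁ o₂ h
      match o₁, o₂ with
      | Option.none, Option.none => rfl
      | Option.none, Option.some t =>
        exfalso
        have h1 : v m ∈ U (f (Option.some t)) := h ▸ hf Option.none
        have h2 : x + t • v m ∈ U (f (Option.some t)) := hf (Option.some t)
        have := hvm _ h1
        rw [this] at h2
        exact hkey t h2
      | Option.some t, Option.none =>
        exfalso
        have h1 : v m ∈ U (f (Option.some t)) := h.symm ▸ hf Option.none
        have h2 : x + t • v m ∈ U (f (Option.some t)) := hf (Option.some t)
        have := hvm _ h1
        rw [this] at h2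
        exact hkey t h2
      | Option.some t, Option.some t' =>
        by_cases htt : t = t'
        · rw [htt]
        · exfalso
          have h1 : x + t • v m ∈ U (f (Option.some t')) := h ▸ hf (Option.some t)
          have h2 : x + t' • v m ∈ U (f (Option.some t')) := hf (Option.some t')
          have hmem : (t - t') • v m ∈ U (f (Option.some t')) := by
            have he : (t - t') • v m = (x + t • v m) - (x + t' • v m) := by
              rw [sub_smul]; abel
            rw [he]; exact (U _).sub_mem h1 h2
          have hvmem : v m ∈ U (f (Option.some t')) :=
            ((U _).smul_mem_iff (sub_ne_zero.mpr htt)).mp hmem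
          have := hvm _ hvmem
          rw [this] at h2
          exact hkey t' h2
    have hbij : Function.Bijective f :=
      (Fintype.bijective_iff_injective_and_card f).mpr ⟨hinj, by simp⟩
    have hzero : ∀ c : Fin (Fintype.card K + 1), x ∈ U c → f (Option.some 0) = c := by
      intro c hxc
      obtain ⟨o, ho⟩ := hbij.2 c
      match o with
      | Option.none =>
        exfalso
        have h1 : v m ∈ U c := ho ▸ hf Option.none
        have := hvm _ h1
        rw [this] at hxc
        exact hxm hxc
      | Option.some s =>
        have h1 : x + s • v m ∈ U c := ho ▸ hf (Option.some s)
        have h2 : s • v m ∈ U c := by simpa using (U c).sub_mem h1 hxc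
        by_cases hs : s = 0
        · rw [← hs]; exact ho
        · exfalso
          have hvmem : v m ∈ U c := ((U c).smul_mem_iff hs).mp h2
          have := hvm _ hvmem
          rw [this] at hxc
          exact hxm hxc
    exact hab ((hzero a hxa).symm.trans (hzero b hxb))
  -- the common intersection
  set T := ⨅ m, U m with hT
  have hTle : ∀ m, T ≤ U m := fun m => iInf_le _ m
  have hinf : ∀ a b, a ≠ b → U a ⊓ U b = T := by
    intro a b hab
    refine le_antisymm ?_ (le_inf (hTle a) (hTle b))
    intro x hx
    rw [hT]
    exact (Submodule.mem_iInf _).mpr fun m => hker m x a b hab hx.1 hx.2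
  have hrank : ∀ a b, a ≠ b →
      finrank K (U a) + finrank K (U b) = k + finrank K T := by
    intro a b hab
    have h := Submodule.finrank_sup_add_finrank_inf_eq (U a) (U b)
    rw [hsup a b hab, hinf a b hab, finrank_top, hdim] at h
    omega
  -- all the U i have the same dimension
  have hthree : ∀ i j : Fin (Fintype.card K + 1), ∃ m, m ≠ i ∧ m ≠ j := by
    intro i j
    have hcompl : (({i, j} : Finset (Fin (Fintype.card K + 1)))ᶜ).Nonempty := by
      rw [← Finset.card_pos, Finset.card_compl]
      have h2 : ({i, j} : Finset (Fin (Fintype.card K + 1))).card ≤ 2 :=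
        (Finset.card_insert_le _ _).trans (by simp)
      have h3 : Fintype.card (Fin (Fintype.card K + 1)) = Fintype.card K + 1 := by simp
      omega
    obtain ⟨m, hm⟩ := hcompl
    simp only [Finset.mem_compl, Finset.mem_insert, Finset.mem_singleton, not_or] at hm
    exact ⟨m, hm.1, hm.2⟩
  have hdall : ∀ i j : Fin (Fintype.card K + 1), finrank K (U i) = finrank K (U j) := by
    intro i j
    by_cases hij : i = j
    · rw [hij]
    · obtain ⟨m, hmi, hmj⟩ := hthree i j
      have h1 := hrank i m (Ne.symm hmi)
      have h2 := hrank j m (Ne.symm hmj)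
      omega
  -- counting
  haveI : Finite V := Module.finite_of_finite K
  haveI : Fintype V := Fintype.ofFinite V
  have i0 : Fin (Fintype.card K + 1) := ⟨0, by omega⟩
  have hdk : finrank K (U i0) < k := by
    have := Submodule.finrank_lt (K := K) (V := V) (hU i0)
    rwa [hdim] at this
  have h2d : k + finrank K T = 2 * finrank K (U i0) := by
    obtain ⟨m, hmi, -⟩ := hthree i0 i0
    have h1 := hrank i0 m (Ne.symm hmi)
    have h2 := hdall i0 m
    omega
  have hcards : ∀ p : Submodule K V,
      (Finset.univ.filter (fun x : V => x ∈ p)).card = Fintype.card K ^ finrank K p := by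
    intro p
    haveI : Fintype p := Fintype.ofFinite p
    have h1 : Fintype.card p = (Finset.univ.filter (fun x : V => x ∈ p)).card :=
      Fintype.card_of_subtype _ (by simp)
    rw [← h1]
    exact card_eq_pow_finrank (K := K) (V := p)
  have hsumA : ∑ i : Fin (Fintype.card K + 1), (Finset.univ.filter (fun x : V => x ∈ U i)).card
      = ∑ x : V, (Finset.univ.filter (fun i => x ∈ U i)).card := by
    simp_rw [Finset.card_filter]
    exact Finset.sum_comm
  have hpoint : ∀ x : V, (Finset.univ.filter (fun i => x ∈ U i)).card
      = Fintype.card K * (if x ∈ T then 1 else 0) + 1 := by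
    intro x
    by_cases hxT : x ∈ T
    · rw [if_pos hxT]
      have he : (Finset.univ.filter (fun i => x ∈ U i)) = Finset.univ :=
        Finset.filter_true_of_mem fun i _ => hTle i hxT
      rw [he]
      simp
    · rw [if_neg hxT]
      obtain ⟨i, hi⟩ := hcov x
      rw [mul_zero, zero_add, Finset.card_eq_one]
      refine ⟨i, ?_⟩
      ext j
      simp only [Finset.mem_filter, Finset.mem_univ, true_and, Finset.mem_singleton]
      constructor
      · intro hj
        by_contra hne
        exact hxT (hT ▸ (Submodule.mem_iInf _).mpr fun m => hker m x j i hne hj hi)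
      · rintro rfl; exact hi
  have hmain : (Fintype.card K + 1) * Fintype.card K ^ finrank K (U i0)
      = Fintype.card K ^ k + Fintype.card K * Fintype.card K ^ finrank K T := by
    have hL : ∑ i : Fin (Fintype.card K + 1), (Finset.univ.filter (fun x : V => x ∈ U i)).card
        = (Fintype.card K + 1) * Fintype.card K ^ finrank K (U i0) := by
      rw [Finset.sum_congr rfl (fun i _ => by rw [hcards (U i), hdall i i0])]
      simp [mul_comm]
    have hR : ∑ x : V, (Finset.univ.filter (fun i => x ∈ U i)).card
        = Fintype.card K ^ k + Fintype.card K * Fintype.card K ^ finrank K T := by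
      rw [Finset.sum_congr rfl (fun x _ => hpoint x)]
      rw [Finset.sum_add_distrib, ← Finset.mul_sum]
      have h1 : ∑ x : V, (if x ∈ T then 1 else 0) = Fintype.card K ^ finrank K T := by
        rw [← hcards T]
        exact (Finset.card_filter _ _).symm
      have h2 : (Finset.univ : Finset V).card = Fintype.card K ^ k := by
        rw [Finset.card_univ, card_eq_pow_finrank (K := K) (V := V), hdim]
      rw [h1, Finset.sum_const, smul_eq_mul, mul_one, h2]
      ring
    rw [← hL, hsumA, hR]
  have hd1 : finrank K (U i0) + 1 = k :=
    aux_arith (Fintype.card K) k (finrank K (U i0)) (finrank K T) hq hdk h2d hmain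
  -- conclusion
  refine ⟨T, by omega, ?_⟩
  ext W
  simp only [Set.mem_range, Set.mem_setOf_eq]
  constructor
  · rintro ⟨i, rfl⟩
    exact ⟨hTle i, by have := hdall i i0; omega⟩
  · rintro ⟨hSW, hW⟩
    have hTW : T < W := by
      refine lt_of_le_of_ne hSW ?_
      intro h
      rw [← h] at hW
      omega
    obtain ⟨x, hxW, hxT⟩ := SetLike.exists_of_lt hTW
    obtain ⟨i, hxi⟩ := hcov x
    refine ⟨i, ?_⟩
    by_contra hne
    have hdUi : finrank K (U i) = k - 1 := by have := hdall i i0; omega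
    have hlt : U i < W ⊔ U i := by
      refine lt_of_le_of_ne le_sup_right ?_
      intro h
      have hWle : W ≤ U i := by rw [h]; exact le_sup_left
      exact hne (Submodule.eq_of_le_of_finrank_le hWle (by omega)).symm
    have hsup2 : finrank K (W ⊔ U i : Submodule K V) = k := by
      have h1 := Submodule.finrank_lt_finrank_of_lt hlt
      have h2 : finrank K (W ⊔ U i : Submodule K V) ≤ k := by
        rw [← hdim]; exact Submodule.finrank_le _
      omega
    have hformula := Submodule.finrank_sup_add_finrank_inf_eq W (U i)
    rw [hsup2, hW, hdUi] at hformula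
    have hinfle : T ≤ W ⊓ U i := le_inf hSW (hTle i)
    have heqT : T = W ⊓ U i :=
      Submodule.eq_of_le_of_finrank_le hinfle (by omega)
    exact hxT (heqT ▸ Submodule.mem_inf.mpr ⟨hxW, hxi⟩)
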